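/- Let p be an odd prime, r ≥ 1 an integer, and D ∈ ℤ/p^rℤ a unit whose reduction modulo p is a non-square in ℤ/pℤ. Then the Pell equation x² − D y² = 1 has exactly p^{r−1}(p + 1) solutions (x,y) in (ℤ/p^rℤ) × (ℤ/p^rℤ). -/

import Mathlib

/-- The Pell conic `H_{D,R} = {(x, y) : x² − D y² = 1}`. -/
def pellConic {R : Type*} [CommRing R] (D : R) : Set (R × R) :=
  {P | P.1 ^ 2 - D * P.2 ^ 2 = 1}


open Finset

-- solve a*t + c ≡ 0 mod p
lemma solve_lin (p : ℕ) [Fact p.Prime] (a c : ℤ) (ha : ¬ (p:ℤ) ∣ a) :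
    ∃ t : ℤ, (p:ℤ) ∣ a * t + c := by
  have ha' : (a : ZMod p) ≠ 0 := by
    simpa [ZMod.intCast_zmod_eq_zero_iff_dvd] using ha
  refine ⟨(((-c : ZMod p) * (a : ZMod p)⁻¹ : ZMod p).val : ℤ), ?_⟩
  rw [← ZMod.intCast_zmod_eq_zero_iff_dvd]
  push_cast
  rw [ZMod.natCast_val, ZMod.cast_id]
  field_simp
  ring

lemma lift_sol (p : ℕ) [Fact p.Prime] (hp2 : p ≠ 2) (Dz uz : ℤ)
    (hu : ¬ (p:ℤ) ∣ uz) (hDz : ¬ (p:ℤ) ∣ Dz)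
    (base : ∃ x y : ℤ, (p:ℤ) ∣ x ^ 2 - Dz * y ^ 2 - uz) :
    ∀ k : ℕ, 1 ≤ k → ∃ x y : ℤ, ((p:ℤ)) ^ k ∣ x ^ 2 - Dz * y ^ 2 - uz := by
  have hp := (Fact.out : p.Prime)
  have hpI : Prime (p : ℤ) := Int.prime_iff_natAbs_prime.mpr (by simpa using hp)
  have h2 : ¬ (p:ℤ) ∣ 2 := by
    intro h
    have : p ∣ 2 := by exact_mod_cast h
    exact hp2 ((Nat.prime_dvd_prime_iff_eq hp Nat.prime_two).mp this)
  intro k hk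
  induction k with
  | zero => omega
  | succ k ih =>
    rcases Nat.eq_or_lt_of_le hk with hk1 | hk2
    · simpa [← hk1] using base
    · have hk' : 1 ≤ k := by omega
      obtain ⟨x, y, hxy⟩ := ih hk'
      obtain ⟨c, hc⟩ := hxy
      set q : ℤ := (p:ℤ) ^ (k - 1) with hq
      have e1 : (p:ℤ) ^ k = q * p := by
        rw [hq, ← pow_succ]; congr 1; omega
      have e2 : (p:ℤ) ^ (k + 1) = q * p * p := by
        rw [← e1, pow_succ]
      rw [e1] at hc
      by_cases hx : (p:ℤ) ∣ x
      · -- adjust y; need p ∤ 2*Dz*y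
        have hy : ¬ (p:ℤ) ∣ y := by
          intro hy
          apply hu
          have h1 : (p:ℤ) ∣ x ^ 2 - Dz * y ^ 2 - uz := by
            rw [hc]; exact ⟨q * c, by ring⟩
          have : uz = x * x - Dz * (y * y) - (x ^ 2 - Dz * y ^ 2 - uz) := by ring
          rw [this]
          exact dvd_sub (dvd_sub (hx.mul_right x) ((hy.mul_right y).mul_left Dz)) h1
        have ha : ¬ (p:ℤ) ∣ -(2 * Dz * y) := by
          rw [dvd_neg]
          intro h
          rcases hpI.dvd_mul.mp h with h' | h'
          · rcases hpI.dvd_mul.mp h' with h'' | h''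
            · exact h2 h''
            · exact hDz h''
          · exact hy h'
        obtain ⟨t, ht⟩ := solve_lin p _ c ha
        obtain ⟨m, hm⟩ := ht
        refine ⟨x, y + t * (q * p), ⟨m - Dz * t ^ 2 * q, ?_⟩⟩
        rw [e2]
        linear_combination hc + q * p * hm
      · have ha : ¬ (p:ℤ) ∣ 2 * x := by
          intro h
          rcases hpI.dvd_mul.mp h with h' | h'
          · exact h2 h'
          · exact hx h'
        obtain ⟨t, ht⟩ := solve_lin p _ c ha
        obtain ⟨m, hm⟩ := ht
        refine ⟨x + t * (q * p), y, ⟨m + t ^ 2 * q, ?_⟩⟩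
        rw [e2]
        linear_combination hc + q * p * hm

lemma isUnit_iff_cast (p r : ℕ) [Fact p.Prime] (hr : 1 ≤ r) (z : ZMod (p ^ r)) :
    IsUnit z ↔ ZMod.castHom (dvd_pow_self p (Nat.one_le_iff_ne_zero.mp hr)) (ZMod p) z ≠ 0 := by
  have hp := (Fact.out : p.Prime)
  haveI : NeZero (p ^ r) := ⟨pow_ne_zero _ hp.pos.ne'⟩
  set π := ZMod.castHom (dvd_pow_self p (Nat.one_le_iff_ne_zero.mp hr)) (ZMod p)
  have hπ : π z = ((z.val : ℕ) : ZMod p) := by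
    simp [π, ZMod.natCast_val]
  constructor
  · intro h hz
    exact (hz ▸ (h.map π)).ne_zero rfl
  · intro h
    rw [hπ, Ne, ZMod.natCast_eq_zero_iff] at h
    have : IsUnit ((z.val : ℕ) : ZMod (p ^ r)) := by
      rw [ZMod.isUnit_iff_coprime]
      exact Nat.Coprime.pow_right _ ((Nat.coprime_comm.mp (hp.coprime_iff_not_dvd.mpr h)))
    simpa [ZMod.natCast_val, ZMod.cast_id] using this

open Polynomial in
lemma base_case (p : ℕ) [Fact p.Prime] (hp2 : p ≠ 2) (d w : ZMod p) (hd : d ≠ 0) :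
    ∃ a b : ZMod p, a ^ 2 - d * b ^ 2 = w := by
  have hp := (Fact.out : p.Prime)
  have hcard : Fintype.card (ZMod p) % 2 = 1 := by
    rw [ZMod.card]
    exact Nat.odd_iff.mp (hp.odd_of_ne_two hp2)
  obtain ⟨a, b, hab⟩ := FiniteField.exists_root_sum_quadratic
    (f := (X ^ 2 : (ZMod p)[X])) (g := C (-d) * X ^ 2 + C 0 * X + C (-w))
    (degree_X_pow 2) (degree_quadratic (neg_ne_zero.mpr hd)) hcard
  refine ⟨a, b, ?_⟩
  simp only [eval_add, eval_mul, eval_pow, eval_X, eval_C] at hab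
  linear_combination hab

lemma surj_norm (p r : ℕ) [Fact p.Prime] (hp2 : p ≠ 2) (hr : 1 ≤ r)
    (D u : ZMod (p ^ r)) (hu : IsUnit u)
    (hd : ZMod.castHom (dvd_pow_self p (Nat.one_le_iff_ne_zero.mp hr)) (ZMod p) D ≠ 0) :
    ∃ a b : ZMod (p ^ r), a ^ 2 - D * b ^ 2 = u := by
  have hp := (Fact.out : p.Prime)
  haveI : NeZero (p ^ r) := ⟨pow_ne_zero _ hp.pos.ne'⟩
  rw [ZMod.castHom_apply] at hd
  have hu' := (isUnit_iff_cast p r hr u).mp hu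
  rw [ZMod.castHom_apply] at hu'
  obtain ⟨a, b, hab⟩ := base_case p hp2 (ZMod.cast D) (ZMod.cast u) hd
  have castval : ∀ z : ZMod (p ^ r), (((z.val : ℤ)) : ZMod p) = ZMod.cast z := by
    intro z; rw [Int.cast_natCast, ZMod.natCast_val]
  have hud : ¬ (p : ℤ) ∣ (u.val : ℤ) := by
    rw [← ZMod.intCast_zmod_eq_zero_iff_dvd, castval]; exact hu'
  have hDd : ¬ (p : ℤ) ∣ (D.val : ℤ) := by
    rw [← ZMod.intCast_zmod_eq_zero_iff_dvd, castval]; exact hd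
  have base : ∃ x y : ℤ, (p:ℤ) ∣ x ^ 2 - (D.val : ℤ) * y ^ 2 - (u.val : ℤ) := by
    refine ⟨(a.val : ℤ), (b.val : ℤ), ?_⟩
    rw [← ZMod.intCast_zmod_eq_zero_iff_dvd]
    push_cast [ZMod.natCast_val, ZMod.cast_id, ZMod.intCast_cast]
    linear_combination hab
  obtain ⟨x, y, hxy⟩ := lift_sol p hp2 _ _ hud hDd base r hr
  refine ⟨(x : ZMod (p ^ r)), (y : ZMod (p ^ r)), ?_⟩
  have h0 : ((x ^ 2 - (D.val : ℤ) * y ^ 2 - (u.val : ℤ) : ℤ) : ZMod (p ^ r)) = 0 := by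
    rw [ZMod.intCast_zmod_eq_zero_iff_dvd]
    exact_mod_cast hxy
  push_cast [ZMod.natCast_val, ZMod.cast_id, ZMod.intCast_cast] at h0
  linear_combination h0

lemma card_ker_cast (p r : ℕ) [Fact p.Prime] (hr : 1 ≤ r) :
    (Finset.univ.filter fun x : ZMod (p ^ r) =>
      ZMod.castHom (dvd_pow_self p (Nat.one_le_iff_ne_zero.mp hr)) (ZMod p) x = 0).card
      = p ^ (r - 1) := by
  have hp := (Fact.out : p.Prime)
  haveI : NeZero (p ^ r) := ⟨pow_ne_zero _ hp.pos.ne'⟩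
  set π := ZMod.castHom (dvd_pow_self p (Nat.one_le_iff_ne_zero.mp hr)) (ZMod p) with hπ
  set f : ZMod (p ^ r) →+ ZMod p := π.toAddMonoidHom with hf
  have hsurj : Function.Surjective f := ZMod.ringHom_surjective π
  have h1 : Nat.card (ZMod (p ^ r)) = Nat.card (ZMod (p ^ r) ⧸ f.ker) * Nat.card f.ker :=
    AddSubgroup.card_eq_card_quotient_mul_card_addSubgroup f.ker
  have h2 : Nat.card (ZMod (p ^ r) ⧸ f.ker) = Nat.card (ZMod p) :=
    Nat.card_congr (QuotientAddGroup.quotientKerEquivOfSurjective f hsurj).toEquiv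
  rw [h2, Nat.card_zmod, Nat.card_zmod] at h1
  have h3 : (Finset.univ.filter fun x : ZMod (p ^ r) => π x = 0).card = Nat.card f.ker := by
    rw [Nat.card_eq_fintype_card, ← Fintype.card_subtype]
    apply Fintype.card_congr
    exact Equiv.subtypeEquivRight (fun x => by simp [f.mem_ker, hf])
  rw [h3]
  have hpow : p ^ r = p * p ^ (r - 1) := by
    rw [← pow_succ']; congr 1; omega
  have hppos : 0 < p := hp.pos
  exact Nat.eq_of_mul_eq_mul_left hppos (by omega)

/-- For an odd prime `p`, `r ≥ 1`, and a unit `D ∈ ℤ/p^rℤ` whose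
reduction modulo `p` is a non-square in `ℤ/pℤ`, the Pell equation `x² − D y² = 1`
has exactly `p^{r−1}(p+1)` solutions in `ℤ/p^rℤ`. -/
theorem pellConic_card_prime_pow (p : ℕ) (hp : p.Prime) (hp2 : p ≠ 2) (r : ℕ) (hr : 1 ≤ r)
    (D : ZMod (p ^ r)) (hDu : IsUnit D)
    (hD : ∀ c : ZMod p, c ^ 2 ≠
      ZMod.castHom (dvd_pow_self p (Nat.one_le_iff_ne_zero.mp hr)) (ZMod p) D) :
    Nat.card (pellConic D) = p ^ (r - 1) * (p + 1) := by
  classical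
  haveI : Fact p.Prime := ⟨hp⟩
  haveI : NeZero (p ^ r) := ⟨pow_ne_zero _ hp.pos.ne'⟩
  set π := ZMod.castHom (dvd_pow_self p (Nat.one_le_iff_ne_zero.mp hr)) (ZMod p) with hπ
  set d : ZMod p := π D with hdd
  have hd : d ≠ 0 := fun h => hD 0 (by rw [h]; ring)
  -- nonsquare ⇒ the norm form is anisotropic mod p
  have hsq : ∀ a b : ZMod p, a ^ 2 - d * b ^ 2 = 0 → a = 0 ∧ b = 0 := by
    intro a b h
    by_cases hb : b = 0
    · refine ⟨?_, hb⟩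
      rw [hb] at h
      have : a ^ 2 = 0 := by linear_combination h
      exact pow_eq_zero_iff (n := 2) (by norm_num) |>.mp this
    · exfalso
      apply hD (a * b⁻¹)
      have hbb : b * b⁻¹ = 1 := mul_inv_cancel₀ hb
      have ha2 : a ^ 2 = d * b ^ 2 := by linear_combination h
      calc (a * b⁻¹) ^ 2 = a ^ 2 * (b⁻¹) ^ 2 := by ring
        _ = d * (b * b⁻¹) ^ 2 := by rw [ha2]; ring
        _ = d := by rw [hbb]; ring
  set N : ZMod (p ^ r) × ZMod (p ^ r) → ZMod (p ^ r) := fun P => P.1 ^ 2 - D * P.2 ^ 2 with hN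
  have hNpi : ∀ P, π (N P) = (π P.1) ^ 2 - d * (π P.2) ^ 2 := by
    intro P; simp [hN, hdd]
  set a := p ^ (r - 1) with ha
  -- kernel count
  have hker : (Finset.univ.filter fun x : ZMod (p ^ r) => π x = 0).card = a :=
    card_ker_cast p r hr
  have huniv : (Finset.univ : Finset (ZMod (p ^ r))).card = a * p := by
    rw [Finset.card_univ, ZMod.card, ha, ← pow_succ]
    congr 1
    omega
  -- unit count
  set t := (Finset.univ.filter fun u : ZMod (p ^ r) => π u ≠ 0) with htdef
  have htcard : t.card + a = a * p := by
    have h0 := Finset.card_filter_add_card_filter_not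
      (s := (Finset.univ : Finset (ZMod (p ^ r)))) (p := fun u => π u ≠ 0)
    simp only [ne_eq, not_not] at h0
    rw [hker, huniv] at h0
    exact h0
  -- bad pairs
  have hbad : (Finset.univ.filter fun P : ZMod (p ^ r) × ZMod (p ^ r) =>
      π P.1 = 0 ∧ π P.2 = 0).card = a * a := by
    rw [← Finset.univ_product_univ,
      Finset.filter_product (fun x : ZMod (p ^ r) => π x = 0) (fun x : ZMod (p ^ r) => π x = 0),
      Finset.card_product, hker]
  -- good pairs
  set good := (Finset.univ.filter fun P : ZMod (p ^ r) × ZMod (p ^ r) => π (N P) ≠ 0)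
    with hgood
  have hgooddecomp : good.card + a * a = (a * p) * (a * p) := by
    rw [← hbad]
    have : ∀ P : ZMod (p ^ r) × ZMod (p ^ r), (π P.1 = 0 ∧ π P.2 = 0) ↔ ¬ (π (N P) ≠ 0) := by
      intro P
      rw [not_not, hNpi]
      constructor
      · rintro ⟨h1, h2⟩; rw [h1, h2]; ring
      · exact hsq _ _
    rw [Finset.filter_congr (fun P _ => this P), hgood]
    rw [Finset.card_filter_add_card_filter_not _]
    rw [Finset.card_univ, Fintype.card_prod, ← Finset.card_univ, huniv]
  -- fiberwise count
  have hfib : good.card = ∑ u ∈ t, (good.filter fun P => N P = u).card := by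
    apply Finset.card_eq_sum_card_fiberwise
    intro P hP
    rw [hgood, Finset.mem_coe, Finset.mem_filter] at hP
    rw [htdef, Finset.mem_coe, Finset.mem_filter]
    exact ⟨Finset.mem_univ _, hP.2⟩
  -- all unit fibers have the same cardinality
  set c := (Finset.univ.filter fun P : ZMod (p ^ r) × ZMod (p ^ r) => N P = 1).card with hc
  have hfibconst : ∀ u ∈ t, (good.filter fun P => N P = u).card = c := by
    intro u hu
    rw [htdef, Finset.mem_filter] at hu
    have hu' : IsUnit u := (isUnit_iff_cast p r hr u).mpr hu.2
    obtain ⟨a₀, b₀, hab⟩ := surj_norm p r hp2 hr D u hu' hd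
    have huv : u * u⁻¹ = 1 := ZMod.mul_inv_of_unit u hu'
    set v := u⁻¹ with hv
    have hfil : good.filter (fun P => N P = u) = Finset.univ.filter fun P => N P = u := by
      ext P
      simp only [hgood, Finset.mem_filter, Finset.mem_univ, true_and]
      constructor
      · rintro ⟨_, h⟩; exact h
      · intro h; exact ⟨h ▸ hu.2, h⟩
    rw [hfil, hc]
    refine Finset.card_nbij'
      (fun P => ((P.1 * a₀ - D * P.2 * b₀) * v, (P.2 * a₀ - P.1 * b₀) * v))
      (fun P => (P.1 * a₀ + D * P.2 * b₀, P.1 * b₀ + P.2 * a₀)) ?_ ?_ ?_ ?_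
    · intro P hP
      rw [Finset.mem_coe, Finset.mem_filter] at hP ⊢
      refine ⟨Finset.mem_univ _, ?_⟩
      have hP2 : P.1 ^ 2 - D * P.2 ^ 2 = u := hP.2
      show ((P.1 * a₀ - D * P.2 * b₀) * v) ^ 2 - D * ((P.2 * a₀ - P.1 * b₀) * v) ^ 2 = 1
      linear_combination ((a₀ ^ 2 - D * b₀ ^ 2) * v ^ 2) * hP2 + (u * v ^ 2) * hab
        + (u * v + 1) * huv
    · intro P hP
      rw [Finset.mem_coe, Finset.mem_filter] at hP ⊢
      refine ⟨Finset.mem_univ _, ?_⟩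
      have hP2 : P.1 ^ 2 - D * P.2 ^ 2 = 1 := hP.2
      show (P.1 * a₀ + D * P.2 * b₀) ^ 2 - D * (P.1 * b₀ + P.2 * a₀) ^ 2 = u
      linear_combination (a₀ ^ 2 - D * b₀ ^ 2) * hP2 + hab
    · intro P hP
      ext
      · show ((P.1 * a₀ - D * P.2 * b₀) * v) * a₀ + D * ((P.2 * a₀ - P.1 * b₀) * v) * b₀ = P.1
        linear_combination P.1 * v * hab + P.1 * huv
      · show ((P.1 * a₀ - D * P.2 * b₀) * v) * b₀ + ((P.2 * a₀ - P.1 * b₀) * v) * a₀ = P.2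
        linear_combination P.2 * v * hab + P.2 * huv
    · intro P hP
      ext
      · show ((P.1 * a₀ + D * P.2 * b₀) * a₀ - D * (P.1 * b₀ + P.2 * a₀) * b₀) * v = P.1
        linear_combination P.1 * v * hab + P.1 * huv
      · show ((P.1 * b₀ + P.2 * a₀) * a₀ - (P.1 * a₀ + D * P.2 * b₀) * b₀) * v = P.2
        linear_combination P.2 * v * hab + P.2 * huv
  -- assemble
  have hsum : good.card = t.card * c := by
    rw [hfib, Finset.sum_congr rfl hfibconst, Finset.sum_const, smul_eq_mul]
  -- the Pell conic is the fiber at 1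
  have hpell : Nat.card (pellConic D) = c := by
    rw [Nat.card_coe_set_eq, Set.ncard_eq_toFinset_card', hc]
    congr 1
    ext P
    simp only [Set.mem_toFinset, Finset.mem_filter, Finset.mem_univ, true_and]
    rfl
  rw [hpell]
  -- arithmetic
  have hZ : (t.card : ℤ) * c = ((a : ℤ) * p) * ((a : ℤ) * p) - (a : ℤ) * a := by
    have h1 : ((good.card : ℤ)) = (t.card : ℤ) * c := by exact_mod_cast hsum
    have h2 : ((good.card : ℤ)) + (a : ℤ) * a = ((a : ℤ) * p) * ((a : ℤ) * p) := by
      exact_mod_cast hgooddecomp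
    linarith
  have htZ : (t.card : ℤ) = (a : ℤ) * p - a := by
    have h3 : ((t.card : ℤ)) + (a : ℤ) = (a : ℤ) * p := by exact_mod_cast htcard
    linarith
  have hane : (a : ℤ) * ((p : ℤ) - 1) ≠ 0 := by
    have hA : 0 < a := by rw [ha]; exact pow_pos hp.pos _
    have hA' : (0:ℤ) < (a:ℤ) := by exact_mod_cast hA
    have hp2' : (2:ℤ) ≤ (p:ℤ) := by exact_mod_cast hp.two_le
    nlinarith
  have key : ((a : ℤ) * ((p:ℤ) - 1)) * (c : ℤ) = ((a : ℤ) * ((p:ℤ) - 1)) * ((a:ℤ) * ((p:ℤ) + 1)) := by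
    linear_combination hZ - (c : ℤ) * htZ
  have : (c : ℤ) = (a : ℤ) * ((p:ℤ) + 1) := mul_left_cancel₀ hane key
  exact_mod_cast this
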